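/- arXiv:1907.02206 — 2 statements merged into one kernel-verified Lean document; each statement's English description precedes it below -/
import Mathlib

section
/- If x* is an optimal solution of the MIQO, then x* is also a global minimizer of f over the reduced feasible set {x ∈ ℝⁿ : A_T x = b_T and x_i = x*_i for all i ∈ I}, where T is the set of tight constraints at x*; moreover the optimal value of this reduced equality-constrained quadratic program equals the optimal value of the MIQO. Hence, given the optimal strategy (T, x*_I), the MIQO solution can be recovered by solving the reduced convex problem. -/
open Matrix

/-- **MIQO solution recovery from the optimal strategy.**
Let `f(x) = (1/2) xᵀPx + qᵀx` with `P` symmetric positive semidefinite, and consider the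
mixed-integer quadratic optimization problem: minimize `f(x)` subject to `Ax ≤ b` and
`x_i ∈ ℤ` for all `i ∈ I`.  If `x` is an optimal solution, then `x` is also a global
minimizer of `f` over the reduced feasible set
`{y : A_T y = b_T and y_i = x_i for all i ∈ I}`, where `T = {i : (Ax)_i = b_i}` is the set
of tight constraints at `x`; moreover, the optimal value of this reduced equality-constrained
quadratic program equals the optimal value `f x` of the MIQO. -/
theorem miqo_reduced_problem_recovery
    {n m : ℕ} (P : Matrix (Fin n) (Fin n) ℝ) (hP : P.PosSemidef)
    (q : Fin n → ℝ) (A : Matrix (Fin m) (Fin n) ℝ) (b : Fin m → ℝ)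
    (I : Finset (Fin n))
    (f : (Fin n → ℝ) → ℝ)
    (hf : ∀ y, f y = (1 / 2) * (y ⬝ᵥ P.mulVec y) + q ⬝ᵥ y)
    (x : Fin n → ℝ)
    (hxfeas : ∀ i, A.mulVec x i ≤ b i)
    (hxint : ∀ i ∈ I, ∃ z : ℤ, x i = (z : ℝ))
    (hopt : ∀ y : Fin n → ℝ, (∀ i, A.mulVec y i ≤ b i) →
      (∀ i ∈ I, ∃ z : ℤ, y i = (z : ℝ)) → f x ≤ f y) :
    IsLeast (f '' {y | (∀ i, A.mulVec x i = b i → A.mulVec y i = b i) ∧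
      ∀ i ∈ I, y i = x i}) (f x) := by
  classical
  constructor
  · exact ⟨x, ⟨fun i h => h, fun i _ => rfl⟩, rfl⟩
  rintro v ⟨y, ⟨hyT, hyI⟩, rfl⟩
  set d : Fin n → ℝ := y - x with hd
  have hdI : ∀ i ∈ I, d i = 0 := by
    intro i hi
    simp [hd, hyI i hi]
  have hAd : ∀ i, A.mulVec x i = b i → A.mulVec d i = 0 := by
    intro i h
    have h2 := hyT i h
    rw [hd, Matrix.mulVec_sub]
    simp [h2, h]
  have hsymm : ∀ u w : Fin n → ℝ, u ⬝ᵥ P.mulVec w = w ⬝ᵥ P.mulVec u := by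
    intro u w
    have hPt : Pᵀ = P := by
      rw [← Matrix.conjTranspose_eq_transpose_of_trivial]; exact hP.1.eq
    rw [Matrix.dotProduct_mulVec, ← Matrix.mulVec_transpose, hPt, dotProduct_comm]
  set L : ℝ := d ⬝ᵥ P.mulVec x + q ⬝ᵥ d with hL
  set Q : ℝ := (1 / 2) * (d ⬝ᵥ P.mulVec d) with hQ
  have hQ0 : 0 ≤ Q := by
    rw [hQ]
    have := hP.dotProduct_mulVec_nonneg d
    simp only [star_trivial] at this
    · positivity
  have hexp : ∀ t : ℝ, f (x + t • d) = f x + t * L + t ^ 2 * Q := by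
    intro t
    rw [hf, hf, hL, hQ]
    simp only [Matrix.mulVec_add, Matrix.mulVec_smul, dotProduct_add,
      add_dotProduct, dotProduct_smul, smul_dotProduct, smul_eq_mul]
    rw [hsymm x d]
    ring
  -- a positive step size keeping feasibility
  set g : Fin m → ℝ := fun i =>
    if A.mulVec x i = b i then 1 else (b i - A.mulVec x i) / (|A.mulVec d i| + 1) with hg
  have hgpos : ∀ i, 0 < g i := by
    intro i
    rw [hg]
    dsimp only
    split
    · norm_num
    · rename_i hb
      have hlt : A.mulVec x i < b i := lt_of_le_of_ne (hxfeas i) hb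
      have : (0:ℝ) < |A.mulVec d i| + 1 := by positivity
      apply div_pos (by linarith) this
  set s : Finset ℝ := insert (1 : ℝ) (Finset.univ.image g) with hs
  have hsne : s.Nonempty := ⟨1, by simp [hs]⟩
  set t0 : ℝ := s.min' hsne with ht0
  have ht0pos : 0 < t0 := by
    rw [ht0, Finset.lt_min'_iff]
    intro c hc
    rw [hs] at hc
    simp only [Finset.mem_insert, Finset.mem_image, Finset.mem_univ, true_and] at hc
    rcases hc with rfl | ⟨i, rfl⟩
    · norm_num
    · exact hgpos i
  have ht0leg : ∀ i, t0 ≤ g i := by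
    intro i
    apply Finset.min'_le
    rw [hs]
    simp only [Finset.mem_insert, Finset.mem_image, Finset.mem_univ, true_and]
    exact Or.inr ⟨i, rfl⟩
  have hfeas : ∀ t : ℝ, 0 < t → t ≤ t0 → ∀ i, A.mulVec (x + t • d) i ≤ b i := by
    intro t ht htle i
    have hAi : A.mulVec (x + t • d) i = A.mulVec x i + t * A.mulVec d i := by
      simp [Matrix.mulVec_add, Matrix.mulVec_smul]
    rw [hAi]
    by_cases hb : A.mulVec x i = b i
    · rw [hAd i hb]
      simp [hb]
    · have hlt : A.mulVec x i < b i := lt_of_le_of_ne (hxfeas i) hb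
      have h1 : t * A.mulVec d i ≤ t * |A.mulVec d i| :=
        mul_le_mul_of_nonneg_left (le_abs_self _) ht.le
      have h2 : t ≤ (b i - A.mulVec x i) / (|A.mulVec d i| + 1) := by
        have := ht0leg i
        rw [hg] at this
        simp only [if_neg hb] at this
        linarith [htle]
      have hpos : (0:ℝ) < |A.mulVec d i| + 1 := by positivity
      have h3 : t * (|A.mulVec d i| + 1) ≤ b i - A.mulVec x i := (le_div_iff₀ hpos).mp h2
      nlinarith [abs_nonneg (A.mulVec d i)]
  have hint : ∀ t : ℝ, ∀ i ∈ I, ∃ z : ℤ, (x + t • d) i = (z : ℝ) := by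
    intro t i hi
    obtain ⟨z, hz⟩ := hxint i hi
    exact ⟨z, by simp [hdI i hi, hz]⟩
  have key : ∀ t : ℝ, 0 < t → t ≤ t0 → 0 ≤ t * L + t ^ 2 * Q := by
    intro t ht htle
    have := hopt (x + t • d) (hfeas t ht htle) (hint t)
    rw [hexp t] at this
    linarith
  have hL0 : 0 ≤ L := by
    by_contra hneg
    push_neg at hneg
    set t : ℝ := min t0 (-L / (Q + 1)) with htdef
    have htpos : 0 < t := by
      apply lt_min ht0pos
      apply div_pos (by linarith) (by linarith)
    have h4 := key t htpos (min_le_left _ _)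
    have ht2 : t ≤ -L / (Q + 1) := min_le_right _ _
    have h3 : t * (Q + 1) ≤ -L := (le_div_iff₀ (by linarith)).mp ht2
    nlinarith [mul_pos htpos htpos, mul_le_mul_of_nonneg_left h3 htpos.le]
  have hy1 : y = x + (1 : ℝ) • d := by
    rw [hd]; ext i; simp
  rw [hy1, hexp 1]
  linarith
end

section
/- The KKT matrix [[P, Cᵀ],[C, 0]] ∈ ℝ^{(n+k)×(n+k)} is invertible if and only if C has full row rank (rank C = k). Consequently, when C has full row rank, for every q ∈ ℝⁿ and d ∈ ℝᵏ the KKT linear system [[P, Cᵀ],[C, 0]](x, ν) = (−q, d) has a unique solution, whose x-component is the unique global minimizer of (1/2)xᵀPx + qᵀx over {x ∈ ℝⁿ : Cx = d}. -/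
open Matrix

section aux

variable {n k : ℕ}

private lemma rank_eq_iff_li {C : Matrix (Fin k) (Fin n) ℝ} :
    C.rank = k ↔ LinearIndependent ℝ (fun i => C i) := by
  constructor
  · intro h
    rw [linearIndependent_iff_card_eq_finrank_span]
    rw [C.rank_eq_finrank_span_row] at h
    simp only [Set.finrank, Fintype.card_fin] at h ⊢
    exact h.symm
  · intro h
    simpa using h.rank_matrix

private lemma posdef_dot_pos {P : Matrix (Fin n) (Fin n) ℝ} (hP : P.PosDef)
    {x : Fin n → ℝ} (hx : x ≠ 0) : 0 < x ⬝ᵥ P.mulVec x := by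
  simpa using hP.dotProduct_mulVec_pos hx

private lemma sym_dot {P : Matrix (Fin n) (Fin n) ℝ} (hP : P.PosDef)
    (x y : Fin n → ℝ) : x ⬝ᵥ P.mulVec y = y ⬝ᵥ P.mulVec x := by
  rw [dotProduct_mulVec, ← mulVec_transpose]
  have hPt : Pᵀ = P := by
    have := hP.1
    simpa [Matrix.IsHermitian] using this
  rw [hPt, dotProduct_comm]

private lemma ct_dot {C : Matrix (Fin k) (Fin n) ℝ} (ν : Fin k → ℝ) (h : Fin n → ℝ) :
    (Cᵀ.mulVec ν) ⬝ᵥ h = ν ⬝ᵥ (C.mulVec h) := by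
  rw [mulVec_transpose, ← dotProduct_mulVec, dotProduct_comm]

end aux

/-- **Invertibility of the KKT matrix.**
Let `P` be symmetric positive definite and `C ∈ ℝ^{k×n}`.  The KKT matrix
`[[P, Cᵀ],[C, 0]]` is invertible if and only if `C` has full row rank (`rank C = k`).
Consequently, when `C` has full row rank, for every `q` and `d` the KKT linear system
`[[P, Cᵀ],[C, 0]] (x, ν) = (-q, d)` has a unique solution, whose `x`-component is the
unique global minimizer of `(1/2) xᵀPx + qᵀx` over `{x : Cx = d}`. -/
theorem kkt_matrix_invertible_iff_full_row_rank
    {n k : ℕ} (P : Matrix (Fin n) (Fin n) ℝ) (hP : P.PosDef)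
    (C : Matrix (Fin k) (Fin n) ℝ) :
    (IsUnit (Matrix.fromBlocks P Cᵀ C (0 : Matrix (Fin k) (Fin k) ℝ)) ↔ C.rank = k) ∧
    (C.rank = k → ∀ (q : Fin n → ℝ) (d : Fin k → ℝ),
      (∃! z : (Fin n → ℝ) × (Fin k → ℝ),
        (Matrix.fromBlocks P Cᵀ C (0 : Matrix (Fin k) (Fin k) ℝ)).mulVec
            (Sum.elim z.1 z.2) = Sum.elim (-q) d) ∧
      (∀ z : (Fin n → ℝ) × (Fin k → ℝ),
        (Matrix.fromBlocks P Cᵀ C (0 : Matrix (Fin k) (Fin k) ℝ)).mulVec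
            (Sum.elim z.1 z.2) = Sum.elim (-q) d →
        C.mulVec z.1 = d ∧
        ∀ y : Fin n → ℝ, C.mulVec y = d → y ≠ z.1 →
          (1 / 2) * (z.1 ⬝ᵥ P.mulVec z.1) + q ⬝ᵥ z.1 <
            (1 / 2) * (y ⬝ᵥ P.mulVec y) + q ⬝ᵥ y)) := by
  set M : Matrix (Fin n ⊕ Fin k) (Fin n ⊕ Fin k) ℝ :=
    Matrix.fromBlocks P Cᵀ C (0 : Matrix (Fin k) (Fin k) ℝ) with hM
  -- full row rank implies the KKT matrix has trivial kernel
  have key : C.rank = k → Function.Injective M.mulVec := by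
    intro hr
    have hli : LinearIndependent ℝ (fun i => C i) := rank_eq_iff_li.mp hr
    have hCt : Function.Injective (Cᵀ.mulVec) := by
      rw [Matrix.mulVec_injective_iff]
      exact hli
    have hker : ∀ v : Fin n ⊕ Fin k → ℝ, M.mulVec v = 0 → v = 0 := by
      intro v hv
      set x : Fin n → ℝ := fun i => v (Sum.inl i) with hx
      set ν : Fin k → ℝ := fun i => v (Sum.inr i) with hν
      have hveq : v = Sum.elim x ν := by funext i; cases i <;> rfl
      rw [hveq, hM, fromBlocks_mulVec] at hv
      have h1 : P.mulVec x + Cᵀ.mulVec ν = 0 := funext fun i => congrFun hv (Sum.inl i)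
      have h2' : C.mulVec x + (0 : Matrix (Fin k) (Fin k) ℝ).mulVec ν = 0 :=
        funext fun i => congrFun hv (Sum.inr i)
      have h2 : C.mulVec x = 0 := by simpa using h2'
      -- xᵀ(Px + Cᵀν) = 0 and xᵀCᵀν = (Cx)ᵀν = 0, hence xᵀPx = 0, so x = 0
      have hx0 : x = 0 := by
        by_contra hx0
        have hpos := posdef_dot_pos hP hx0
        have : x ⬝ᵥ (P.mulVec x + Cᵀ.mulVec ν) = 0 := by rw [h1, dotProduct_zero]
        rw [dotProduct_add] at this
        have hcross : x ⬝ᵥ Cᵀ.mulVec ν = 0 := by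
          rw [dotProduct_comm, ct_dot, h2, dotProduct_zero]
        rw [hcross, add_zero] at this
        linarith
      have hν0 : ν = 0 := by
        apply hCt
        rw [mulVec_zero]
        have := h1
        rw [hx0, mulVec_zero, zero_add] at this
        exact this
      rw [hveq, hx0, hν0]
      funext i; cases i <;> simp
    intro a b hab
    have h0 : M.mulVec (a - b) = 0 := by rw [mulVec_sub, hab, sub_self]
    exact sub_eq_zero.mp (hker _ h0)
  have hiff : IsUnit M ↔ C.rank = k := by
    constructor
    · intro hU
      have hMinj : Function.Injective M.mulVec := mulVec_injective_iff_isUnit.mpr hU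
      have hCt : Function.Injective (Cᵀ.mulVec) := by
        intro a b hab
        have h : M.mulVec (Sum.elim (0 : Fin n → ℝ) a) =
            M.mulVec (Sum.elim (0 : Fin n → ℝ) b) := by
          rw [hM, fromBlocks_mulVec, fromBlocks_mulVec]
          simp [hab]
        have := hMinj h
        funext i
        exact congrFun this (Sum.inr i)
      rw [rank_eq_iff_li]
      have := Matrix.mulVec_injective_iff.mp hCt
      exact this
    · intro hr
      exact mulVec_injective_iff_isUnit.mp (key hr)
  refine ⟨hiff, fun hr q d => ?_⟩
  have hMinj := key hr
  have hU : IsUnit M := hiff.mpr hr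
  have hInv : M * M⁻¹ = 1 := mul_nonsing_inv M ((Matrix.isUnit_iff_isUnit_det M).mp hU)
  constructor
  · -- existence and uniqueness of the solution
    set w : Fin n ⊕ Fin k → ℝ := M⁻¹.mulVec (Sum.elim (-q) d) with hw
    refine ⟨(fun i => w (Sum.inl i), fun i => w (Sum.inr i)), ?_, ?_⟩
    · have hwe : Sum.elim (fun i => w (Sum.inl i)) (fun i => w (Sum.inr i)) = w := by
        funext i; cases i <;> rfl
      show M.mulVec (Sum.elim (fun i => w (Sum.inl i)) (fun i => w (Sum.inr i))) =
        Sum.elim (-q) d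
      rw [hwe, hw, mulVec_mulVec, hInv, one_mulVec]
    · intro z hz
      have hze : Sum.elim z.1 z.2 = w := by
        apply hMinj
        rw [hz, hw, mulVec_mulVec, hInv, one_mulVec]
      ext i
      · exact congrFun hze (Sum.inl i)
      · exact congrFun hze (Sum.inr i)
  · -- optimality
    intro z hz
    obtain ⟨x, ν⟩ := z
    rw [hM, fromBlocks_mulVec] at hz
    have h1 : P.mulVec x + Cᵀ.mulVec ν = -q := funext fun i => congrFun hz (Sum.inl i)
    have h2' : C.mulVec x + (0 : Matrix (Fin k) (Fin k) ℝ).mulVec ν = d :=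
      funext fun i => congrFun hz (Sum.inr i)
    have h2 : C.mulVec x = d := by simpa using h2'
    refine ⟨h2, fun y hy hyx => ?_⟩
    set h : Fin n → ℝ := y - x with hh
    have hh0 : h ≠ 0 := sub_ne_zero.mpr hyx
    have hCh : C.mulVec h = 0 := by
      rw [hh, mulVec_sub, hy, h2, sub_self]
    have hpos : 0 < h ⬝ᵥ P.mulVec h := posdef_dot_pos hP hh0
    -- q = -(Px + Cᵀν)
    have hq : q = -(P.mulVec x + Cᵀ.mulVec ν) := by rw [h1, neg_neg]
    have hyx' : y = x + h := by rw [hh]; abel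
    -- expand everything
    have expand : y ⬝ᵥ P.mulVec y =
        x ⬝ᵥ P.mulVec x + 2 * (x ⬝ᵥ P.mulVec h) + h ⬝ᵥ P.mulVec h := by
      rw [hyx', mulVec_add, dotProduct_add, add_dotProduct, add_dotProduct,
        sym_dot hP h x]
      ring
    have hqy : q ⬝ᵥ y = q ⬝ᵥ x + q ⬝ᵥ h := by
      rw [hyx', dotProduct_add]
    have hqh : q ⬝ᵥ h = -(x ⬝ᵥ P.mulVec h) := by
      rw [hq, neg_dotProduct, add_dotProduct, ct_dot, hCh, dotProduct_zero, add_zero,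
        dotProduct_comm, sym_dot hP h x]
    rw [expand, hqy, hqh]
    linarith
end
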